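/- Let n, m ≥ 1, let C, A₁, …, A_m be real symmetric n×n matrices and let b ∈ ℝ^m. Suppose X_k is a real symmetric positive definite n×n matrix with Tr(A_i · X_k) = b_i for all i = 1, …, m, and suppose U is an n×n real matrix with X_k = Uᵀ U. Suppose further that X* is a real symmetric positive semidefinite n×n matrix with Tr(A_i · X*) = b_i for all i and Tr(C · X*) < Tr(C · X_k). Then there exist a real symmetric n×n matrix X̂ and a symmetric diagonally dominant matrix Q such that X̂ = Uᵀ Q U, Tr(A_i · X̂) = b_i for all i, and Tr(C · X̂) < Tr(C · X_k). (In particular, the optimal value of iterate k+1 of the LP sequence, which minimizes Tr(C·X) subject to the affine constraints and X ∈ DD(U), is strictly smaller than Tr(C · X_k).) -/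

import Mathlib

open scoped Matrix
/-- A real matrix is diagonally dominant if `A i i ≥ ∑_{j ≠ i} |A i j|` for every `i`. -/
def IsDiagDom {n : ℕ} (A : Matrix (Fin n) (Fin n) ℝ) : Prop :=
  ∀ i, ∑ j ∈ Finset.univ.filter (fun j => j ≠ i), |A i j| ≤ A i i

/-- Strict improvement of the LP iterates (Theorem 3.1 for the DSOS/LP sequence):
if `X_k = Uᵀ U` is a symmetric positive definite feasible point and `X*` is a symmetric
psd feasible point with strictly smaller objective value, then there is a feasible point
`X̂ = Uᵀ Q U` with `Q` symmetric diagonally dominant whose objective value is strictly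
smaller than that of `X_k`. -/
theorem lp_strict_improvement {n m : ℕ} (hn : 1 ≤ n) (hm : 1 ≤ m)
    (C : Matrix (Fin n) (Fin n) ℝ) (hC : C.IsSymm)
    (A : Fin m → Matrix (Fin n) (Fin n) ℝ) (hA : ∀ i, (A i).IsSymm)
    (b : Fin m → ℝ)
    (Xk : Matrix (Fin n) (Fin n) ℝ) (hXkSymm : Xk.IsSymm)
    (hXkPd : ∀ x : Fin n → ℝ, x ≠ 0 → 0 < dotProduct x (Xk.mulVec x))
    (hXkFeas : ∀ i, (A i * Xk).trace = b i)
    (U : Matrix (Fin n) (Fin n) ℝ) (hU : Xk = Uᵀ * U)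
    (Xstar : Matrix (Fin n) (Fin n) ℝ) (hXsSymm : Xstar.IsSymm)
    (hXsPsd : ∀ x : Fin n → ℝ, 0 ≤ dotProduct x (Xstar.mulVec x))
    (hXsFeas : ∀ i, (A i * Xstar).trace = b i)
    (hObj : (C * Xstar).trace < (C * Xk).trace) :
    ∃ (Xhat Q : Matrix (Fin n) (Fin n) ℝ),
      Xhat.IsSymm ∧ Q.IsSymm ∧ IsDiagDom Q ∧
      Xhat = Uᵀ * Q * U ∧
      (∀ i, (A i * Xhat).trace = b i) ∧
      (C * Xhat).trace < (C * Xk).trace := by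
  -- U is invertible since Xk = Uᵀ U is positive definite
  have hPd : Xk.PosDef := by
    refine Matrix.PosDef.of_dotProduct_mulVec_pos ?_ (fun x hx => ?_)
    · rw [Matrix.IsHermitian]
      rw [show Xkᴴ = Xkᵀ from rfl]
      exact hXkSymm
    · simpa using hXkPd x hx
  have hdet : IsUnit U.det := by
    have h1 : (0:ℝ) < Xk.det := hPd.det_pos
    rw [hU, Matrix.det_mul, Matrix.det_transpose] at h1
    exact isUnit_iff_ne_zero.mpr (by intro h; rw [h] at h1; simp at h1)
  have hUinv : U⁻¹ * U = 1 := Matrix.nonsing_inv_mul U hdet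
  set M : Matrix (Fin n) (Fin n) ℝ := (U⁻¹)ᵀ * Xstar * U⁻¹ with hM
  have hMsymm : Mᵀ = M := by
    rw [hM, Matrix.transpose_mul, Matrix.transpose_mul, Matrix.transpose_transpose,
      hXsSymm, Matrix.mul_assoc]
  have hUMU : Uᵀ * M * U = Xstar := by
    have key : Uᵀ * M * U = (U⁻¹ * U)ᵀ * Xstar * (U⁻¹ * U) := by
      rw [hM, Matrix.transpose_mul]
      noncomm_ring
    rw [key, hUinv]
    simp
  set S : ℝ := ∑ i, ∑ j, |M i j| with hS
  have hS0 : 0 ≤ S := Finset.sum_nonneg fun i _ =>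
    Finset.sum_nonneg fun j _ => abs_nonneg _
  set l : ℝ := 1 / (1 + S) with hl
  have h1S : (0:ℝ) < 1 + S := by linarith
  have hl0 : 0 < l := by positivity
  have hl1 : l * (1 + S) = 1 := by rw [hl]; field_simp
  have hlle : l ≤ 1 := by nlinarith
  refine ⟨(1 - l) • Xk + l • Xstar, (1 - l) • 1 + l • M, ?_, ?_, ?_, ?_, ?_, ?_⟩
  · rw [Matrix.IsSymm, Matrix.transpose_add, Matrix.transpose_smul,
      Matrix.transpose_smul, hXkSymm, hXsSymm]
  · rw [Matrix.IsSymm, Matrix.transpose_add, Matrix.transpose_smul,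
      Matrix.transpose_smul, Matrix.transpose_one, hMsymm]
  · intro i
    have hrow : ∑ j ∈ Finset.univ.filter (fun j => j ≠ i), |M i j| + |M i i| ≤ S := by
      have hsplit := Finset.sum_filter_add_sum_filter_not Finset.univ
        (fun j => j ≠ i) (fun j => |M i j|)
      have hfe : Finset.univ.filter (fun j => ¬ j ≠ i) = {i} := by
        ext j; simp
      rw [hfe, Finset.sum_singleton] at hsplit
      have hle : ∑ j, |M i j| ≤ S := by
        rw [hS]
        exact Finset.single_le_sum (f := fun i => ∑ j, |M i j|)
          (fun i _ => Finset.sum_nonneg fun j _ => abs_nonneg _) (Finset.mem_univ i)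
      linarith
    have hdiag : ((1 - l) • (1 : Matrix (Fin n) (Fin n) ℝ) + l • M) i i
        = (1 - l) + l * M i i := by
      simp [Matrix.add_apply, Matrix.smul_apply, Matrix.one_apply]
    rw [hdiag]
    have hoff : ∑ j ∈ Finset.univ.filter (fun j => j ≠ i),
        |((1 - l) • (1 : Matrix (Fin n) (Fin n) ℝ) + l • M) i j|
        = l * ∑ j ∈ Finset.univ.filter (fun j => j ≠ i), |M i j| := by
      rw [Finset.mul_sum]
      apply Finset.sum_congr rfl
      intro j hj
      have hji : j ≠ i := by simpa using hj
      simp [Matrix.add_apply, Matrix.smul_apply, Matrix.one_apply, hji.symm,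
        Ne.symm hji, abs_mul, abs_of_pos hl0]
    rw [hoff]
    have habs : -|M i i| ≤ M i i := neg_abs_le _
    nlinarith [mul_pos hl0 h1S]
  · rw [Matrix.mul_add, Matrix.add_mul, Matrix.mul_smul, Matrix.mul_smul,
      Matrix.smul_mul, Matrix.smul_mul, Matrix.mul_one, ← hU, hUMU]
  · intro i
    have := hXkFeas i
    have := hXsFeas i
    rw [Matrix.mul_add, Matrix.mul_smul, Matrix.mul_smul, Matrix.trace_add,
      Matrix.trace_smul, Matrix.trace_smul, hXkFeas i, hXsFeas i]
    simp only [smul_eq_mul]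
    ring
  · rw [Matrix.mul_add, Matrix.mul_smul, Matrix.mul_smul, Matrix.trace_add,
      Matrix.trace_smul, Matrix.trace_smul]
    simp only [smul_eq_mul]
    nlinarith
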